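/- Let M > 0 and let γ = (t, x) : [0, ∞) → ℝ × ℝ³ be a C¹ curve with 0 < ‖x(τ)‖ < 2M, Q_M(t'(τ), x'(τ), x(τ)) = −1, and ⟨x(τ), x'(τ)⟩ > 0 for every τ ≥ 0 (a past-directed unit-speed timelike curve defined for all values of its arc length). Then ‖x(τ)‖ → 2M as τ → ∞. -/

import Mathlib

/-- The Schwarzschild quadratic form of mass `M`, evaluated on a velocity `(t', x')`
at a point with spatial part `x` (where `0 < ‖x‖ < 2M`). -/
noncomputable def QM (M : ℝ) (t' : ℝ) (x' x : EuclideanSpace ℝ (Fin 3)) : ℝ :=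
  (2 * M / ‖x‖ - 1) * t' ^ 2 + ‖x'‖ ^ 2
    - (2 * M / ((2 * M - ‖x‖) * ‖x‖ ^ 2)) * (inner ℝ x x' : ℝ) ^ 2

/-- Let `M > 0` and let `γ = (t, x) : [0, ∞) → ℝ × ℝ³` be a C¹ curve with
`0 < ‖x(τ)‖ < 2M`, `Q_M(t'(τ), x'(τ), x(τ)) = −1`, and `⟨x(τ), x'(τ)⟩ > 0` for every
`τ ≥ 0` (a past-directed unit-speed timelike curve defined for all values of its
arc length). Then `‖x(τ)‖ → 2M` as `τ → ∞`. -/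
theorem radial_coordinate_tendsto_two_M (M : ℝ) (hM : 0 < M)
    (t t' : ℝ → ℝ) (x x' : ℝ → EuclideanSpace ℝ (Fin 3))
    (ht : ∀ τ : ℝ, 0 ≤ τ → HasDerivWithinAt t (t' τ) (Set.Ici 0) τ)
    (hx : ∀ τ : ℝ, 0 ≤ τ → HasDerivWithinAt x (x' τ) (Set.Ici 0) τ)
    (ht'c : ContinuousOn t' (Set.Ici 0)) (hx'c : ContinuousOn x' (Set.Ici 0))
    (hr : ∀ τ : ℝ, 0 ≤ τ → 0 < ‖x τ‖ ∧ ‖x τ‖ < 2 * M)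
    (hQ : ∀ τ : ℝ, 0 ≤ τ → QM M (t' τ) (x' τ) (x τ) = -1)
    (hpd : ∀ τ : ℝ, 0 ≤ τ → (0 : ℝ) < inner ℝ (x τ) (x' τ)) :
    Filter.Tendsto (fun τ => ‖x τ‖) Filter.atTop (nhds (2 * M)) := by
  classical
  set F : ℝ → ℝ := fun τ => (inner ℝ (x τ) (x τ) : ℝ) with hFdef
  have hFnorm : ∀ τ : ℝ, F τ = ‖x τ‖ ^ 2 := fun τ => real_inner_self_eq_norm_sq _
  -- key inequality: ⟪x, x'⟫² ≥ (2M - r) r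
  have key : ∀ τ : ℝ, 0 ≤ τ →
      (2 * M - ‖x τ‖) * ‖x τ‖ ≤ ((inner ℝ (x τ) (x' τ) : ℝ)) ^ 2 := by
    intro τ hτ
    obtain ⟨h1, h2⟩ := hr τ hτ
    have hq := hQ τ hτ
    unfold QM at hq
    set r := ‖x τ‖ with hrdef
    set p : ℝ := inner ℝ (x τ) (x' τ) with hpdef
    set n := ‖x' τ‖ with hndef
    have hcs : p ^ 2 ≤ r ^ 2 * n ^ 2 := by
      have h := abs_real_inner_le_norm (x τ) (x' τ)
      have h' : |p| ^ 2 ≤ (r * n) ^ 2 := by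
        apply pow_le_pow_left₀ (abs_nonneg _) h
      calc p ^ 2 = |p| ^ 2 := (sq_abs p).symm
        _ ≤ (r * n) ^ 2 := h'
        _ = r ^ 2 * n ^ 2 := by ring
    have h3 : 0 < 2 * M - r := by linarith
    have ht2 : (0 : ℝ) ≤ (t' τ) ^ 2 := sq_nonneg _
    have hrne : r ≠ 0 := ne_of_gt h1
    have h3ne : 2 * M - r ≠ 0 := ne_of_gt h3
    field_simp at hq
    nlinarith [sq_nonneg (t' τ), mul_pos h1 h3, sq_nonneg p, sq_nonneg n,
      mul_nonneg (mul_nonneg h3.le (sq_nonneg (t' τ))) h3.le,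
      mul_nonneg (mul_nonneg h3.le h1.le) (sq_nonneg (t' τ)),
      mul_pos h1 h1]
  -- continuity and derivative of F
  have hxc : ContinuousOn x (Set.Ici 0) := fun τ hτ => (hx τ hτ).continuousWithinAt
  have hFc : ContinuousOn F (Set.Ici 0) := hxc.inner hxc
  have hFderiv : ∀ τ : ℝ, 0 < τ →
      HasDerivAt F (2 * (inner ℝ (x τ) (x' τ) : ℝ)) τ := by
    intro τ hτ
    have h := HasDerivWithinAt.inner ℝ (hx τ hτ.le) (hx τ hτ.le)
    have hmem : Set.Ici (0 : ℝ) ∈ nhds τ := Ici_mem_nhds hτ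
    have h2 := h.hasDerivAt hmem
    refine h2.congr_deriv ?_
    rw [real_inner_comm (x' τ) (x τ)]; ring
  have hFdiff : DifferentiableOn ℝ F (interior (Set.Ici (0 : ℝ))) := by
    rw [interior_Ici]
    exact fun τ hτ => ((hFderiv τ hτ).differentiableAt).differentiableWithinAt
  have hderiv_eq : ∀ τ : ℝ, 0 < τ → deriv F τ = 2 * (inner ℝ (x τ) (x' τ) : ℝ) :=
    fun τ hτ => (hFderiv τ hτ).deriv
  -- F is monotone on Ici 0
  have hFmono : ∀ a ∈ Set.Ici (0 : ℝ), ∀ b ∈ Set.Ici (0 : ℝ), a ≤ b → F a ≤ F b := by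
    intro a ha b hb hab
    have := (convex_Ici (0 : ℝ)).mul_sub_le_image_sub_of_le_deriv hFc hFdiff
      (C := 0) (by
        intro τ hτ
        rw [interior_Ici] at hτ
        rw [hderiv_eq τ hτ]
        have := hpd τ hτ.le
        linarith) a ha b hb hab
    linarith [this]
  have hrmono : ∀ a ∈ Set.Ici (0 : ℝ), ∀ b ∈ Set.Ici (0 : ℝ), a ≤ b → ‖x a‖ ≤ ‖x b‖ := by
    intro a ha b hb hab
    have h := hFmono a ha b hb hab
    rw [hFnorm, hFnorm] at h
    nlinarith [norm_nonneg (x a), norm_nonneg (x b)]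
  -- main claim: for every ε > 0, eventually ‖x τ‖ > 2M - ε
  rw [Metric.tendsto_atTop]
  intro ε hε
  have hr0 : 0 < ‖x 0‖ := (hr 0 le_rfl).1
  -- there exists T ≥ 0 with 2M - ε < ‖x T‖
  have hT : ∃ T : ℝ, 0 ≤ T ∧ 2 * M - ε < ‖x T‖ := by
    by_contra hcon
    push_neg at hcon
    set c : ℝ := Real.sqrt (ε * ‖x 0‖) with hcdef
    have hcpos : 0 < c := Real.sqrt_pos.mpr (mul_pos hε hr0)
    -- lower bound on the derivative
    have hlow : ∀ τ : ℝ, 0 < τ → c ≤ (inner ℝ (x τ) (x' τ) : ℝ) := by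
      intro τ hτ
      have h1 := key τ hτ.le
      have h2 := hcon τ hτ.le
      have h3 : ‖x 0‖ ≤ ‖x τ‖ := hrmono 0 Set.self_mem_Ici τ (Set.mem_Ici.mpr hτ.le) hτ.le
      have h4 : ε * ‖x 0‖ ≤ (inner ℝ (x τ) (x' τ) : ℝ) ^ 2 := by
        have : ε ≤ 2 * M - ‖x τ‖ := by linarith
        nlinarith [(hr τ hτ.le).1]
      have h5 := Real.sqrt_le_sqrt h4
      rwa [Real.sqrt_sq (hpd τ hτ.le).le] at h5
    have hgrow := (convex_Ici (0 : ℝ)).mul_sub_le_image_sub_of_le_deriv hFc hFdiff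
      (C := 2 * c) (by
        intro τ hτ
        rw [interior_Ici] at hτ
        rw [hderiv_eq τ hτ]
        linarith [hlow τ hτ])
    set T : ℝ := ((2 * M) ^ 2 + 1) / (2 * c) with hTdef
    have hTpos : 0 < T := by positivity
    have h6 := hgrow 0 Set.self_mem_Ici T (Set.mem_Ici.mpr hTpos.le) hTpos.le
    have h7 : 2 * c * (T - 0) = (2 * M) ^ 2 + 1 := by
      rw [hTdef, sub_zero]; field_simp
    have h8 : F T ≤ (2 * M) ^ 2 := by
      rw [hFnorm]
      nlinarith [(hr T hTpos.le).2, (hr T hTpos.le).1]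
    have h9 : 0 ≤ F 0 := by rw [hFnorm]; positivity
    linarith
  obtain ⟨T, hT0, hTgt⟩ := hT
  refine ⟨T, fun n hn => ?_⟩
  have hn0 : 0 ≤ n := le_trans hT0 hn
  have h1 : ‖x T‖ ≤ ‖x n‖ := hrmono T (Set.mem_Ici.mpr hT0) n (Set.mem_Ici.mpr hn0) hn
  have h2 : ‖x n‖ < 2 * M := (hr n hn0).2
  rw [Real.dist_eq, abs_lt]
  constructor <;> linarith
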